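/- Let g : ℝ^d → ℝ be convex and differentiable with l-Lipschitz gradient and bounded below by a constant C₂. Let L > l, let Θ ⊆ ℝ^d be a nonempty closed set, and let (θ_m) be a sequence in Θ satisfying θ_{m+1} ∈ argmin_{θ ∈ Θ} ‖θ - (θ_m - (1/L)∇g(θ_m))‖₂². Then ‖θ_{m+1} - θ_m‖₂ → 0 as m → ∞. -/

import Mathlib

open Filter Real InnerProductSpace

variable {E : Type*} [NormedAddCommGroup E] [InnerProductSpace ℝ E] [CompleteSpace E]

local notation "⟪" x ", " y "⟫" => @inner ℝ _ _ x y

lemma curve_deriv (g : E → ℝ) (hdiff : Differentiable ℝ g) (x v : E) (t : ℝ) :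
    HasDerivAt (fun s : ℝ => g (x + s • v)) ⟪gradient g (x + t • v), v⟫ t := by
  have h1 : HasDerivAt (fun s : ℝ => x + s • v) v t := by
    simpa using ((hasDerivAt_id t).smul_const v).const_add x
  have h2 : HasFDerivAt g (toDual ℝ E (gradient g (x + t • v))) (x + t • v) :=
    (hdiff _).hasGradientAt.hasFDerivAt
  exact h2.comp_hasDerivAt t h1

lemma descent (g : E → ℝ) (l : ℝ) (hl : 0 ≤ l) (hdiff : Differentiable ℝ g)
    (hlip : ∀ x y : E, ‖gradient g x - gradient g y‖ ≤ l * ‖x - y‖) (x y : E) :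
    g y ≤ g x + ⟪gradient g x, y - x⟫ + l / 2 * ‖y - x‖ ^ 2 := by
  set v := y - x with hv
  have hcont : Continuous fun t : ℝ => (⟪gradient g (x + t • v), v⟫ : ℝ) := by
    have hlg : LipschitzWith (Real.toNNReal (l * ‖v‖)) (fun t : ℝ => gradient g (x + t • v)) := by
      apply LipschitzWith.of_dist_le_mul
      intro s t
      simp only [dist_eq_norm]
      calc ‖gradient g (x + s • v) - gradient g (x + t • v)‖
          ≤ l * ‖(x + s • v) - (x + t • v)‖ := hlip _ _
        _ = l * ‖v‖ * |s - t| := by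
            rw [show (x + s • v) - (x + t • v) = (s - t) • v by module,
              norm_smul, Real.norm_eq_abs]; ring
        _ ≤ Real.toNNReal (l * ‖v‖) * |s - t| := by
            gcongr; exact Real.le_coe_toNNReal _
    exact (continuous_inner.comp ((hlg.continuous).prodMk continuous_const))
  have hftc : (∫ t in (0:ℝ)..1, ⟪gradient g (x + t • v), v⟫) = g y - g x := by
    have := intervalIntegral.integral_eq_sub_of_hasDerivAt
      (f := fun s : ℝ => g (x + s • v))
      (f' := fun t : ℝ => ⟪gradient g (x + t • v), v⟫)
      (a := 0) (b := 1)
      (fun t _ => curve_deriv g hdiff x v t) (hcont.intervalIntegrable 0 1)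
    simpa [hv] using this
  have hmono : (∫ t in (0:ℝ)..1, ⟪gradient g (x + t • v), v⟫)
      ≤ ∫ t in (0:ℝ)..1, (⟪gradient g x, v⟫ + l * ‖v‖ ^ 2 * t) := by
    apply intervalIntegral.integral_mono_on (by norm_num)
      (hcont.intervalIntegrable 0 1)
      ((continuous_const.add (continuous_const.mul continuous_id')).intervalIntegrable 0 1)
    intro t ht
    have key : ⟪gradient g (x + t • v) - gradient g x, v⟫ ≤ l * ‖v‖ ^ 2 * t := by
      calc ⟪gradient g (x + t • v) - gradient g x, v⟫
          ≤ ‖gradient g (x + t • v) - gradient g x‖ * ‖v‖ := real_inner_le_norm _ _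
        _ ≤ (l * ‖(x + t • v) - x‖) * ‖v‖ := by gcongr; exact hlip _ _
        _ = l * ‖v‖ ^ 2 * |t| := by
            rw [show (x + t • v) - x = t • v by module, norm_smul, Real.norm_eq_abs]; ring
        _ = l * ‖v‖ ^ 2 * t := by rw [abs_of_nonneg ht.1]
    have := inner_sub_left (𝕜 := ℝ) (gradient g (x + t • v)) (gradient g x) v
    show _ ≤ ⟪gradient g x, v⟫ + l * ‖v‖ ^ 2 * t
    linarith [key, this.symm.le, this.le]
  have hcalc : (∫ t in (0:ℝ)..1, (⟪gradient g x, v⟫ + l * ‖v‖ ^ 2 * t))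
      = ⟪gradient g x, v⟫ + l / 2 * ‖v‖ ^ 2 := by
    rw [intervalIntegral.integral_add (g := fun t : ℝ => l * ‖v‖ ^ 2 * t) (intervalIntegrable_const)
      ((continuous_const.mul continuous_id').intervalIntegrable 0 1),
      intervalIntegral.integral_const_mul]
    rw [integral_id, intervalIntegral.integral_const]
    simp; ring
  linarith [hftc.symm.le, hmono, hcalc.le]




/-- Successive projected gradient iterates get arbitrarily close:
`‖θ_{m+1} - θ_m‖ → 0` when `g` is convex, differentiable, has `l`-Lipschitz gradient,
is bounded below, and the step size is `1/L` with `L > l`. -/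
theorem projected_gradient_successive_diff_tendsto_zero {d : ℕ}
    (g : EuclideanSpace ℝ (Fin d) → ℝ) (l L C₂ : ℝ)
    (hconv : ConvexOn ℝ Set.univ g)
    (hdiff : Differentiable ℝ g)
    (hlip : ∀ θ θ' : EuclideanSpace ℝ (Fin d),
      ‖gradient g θ - gradient g θ'‖ ≤ l * ‖θ - θ'‖)
    (hbdd : ∀ θ, C₂ ≤ g θ)
    (hL : l < L)
    (Θ : Set (EuclideanSpace ℝ (Fin d))) (hΘ : Θ.Nonempty) (hΘclosed : IsClosed Θ)
    (θ : ℕ → EuclideanSpace ℝ (Fin d))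
    (hmem : ∀ m, θ m ∈ Θ)
    (hmin : ∀ m, ∀ θ' ∈ Θ, ‖θ (m + 1) - (θ m - (1 / L) • gradient g (θ m))‖ ^ 2 ≤
      ‖θ' - (θ m - (1 / L) • gradient g (θ m))‖ ^ 2) :
    Filter.Tendsto (fun m => ‖θ (m + 1) - θ m‖) Filter.atTop (nhds 0) := by
  rcases Nat.eq_zero_or_pos d with hd | hd
  · subst hd
    have : ∀ m, ‖θ (m + 1) - θ m‖ = 0 := by
      intro m
      rw [norm_eq_zero, sub_eq_zero]
      exact Subsingleton.elim _ _
    simpa [this] using tendsto_const_nhds (α := ℝ) (x := 0) (f := Filter.atTop (α := ℕ))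
  -- l ≥ 0, L > 0
  have hl0 : 0 ≤ l := by
    have hv : ‖(EuclideanSpace.single (⟨0, hd⟩ : Fin d) (1:ℝ)) - 0‖ = 1 := by
      simp [EuclideanSpace.norm_single]
    have := hlip (EuclideanSpace.single (⟨0, hd⟩ : Fin d) (1:ℝ)) 0
    rw [hv, mul_one] at this
    exact le_trans (norm_nonneg _) this
  have hL0 : 0 < L := lt_of_le_of_lt hl0 hL
  set a : ℕ → ℝ := fun m => g (θ m) with ha
  set Δ : ℕ → EuclideanSpace ℝ (Fin d) := fun m => θ (m + 1) - θ m with hΔ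
  -- key inequality
  have key : ∀ m, (L - l) / 2 * ‖Δ m‖ ^ 2 ≤ a m - a (m + 1) := by
    intro m
    set G := gradient g (θ m) with hG
    have h1 := hmin m (θ m) (hmem m)
    have he1 : θ (m + 1) - (θ m - (1 / L) • G) = Δ m + (1 / L) • G := by
      simp [hΔ]; abel
    have he2 : θ m - (θ m - (1 / L) • G) = (1 / L) • G := by abel
    rw [he1, he2] at h1
    have hexp : ‖Δ m + (1 / L) • G‖ ^ 2
        = ‖Δ m‖ ^ 2 + 2 * ⟪Δ m, (1 / L) • G⟫ + ‖(1 / L) • G‖ ^ 2 :=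
      norm_add_sq_real _ _
    have hin : ⟪Δ m, (1 / L) • G⟫ = (1 / L) * ⟪Δ m, G⟫ := real_inner_smul_right _ _ _
    have h2 : ‖Δ m‖ ^ 2 + 2 * ((1 / L) * ⟪Δ m, G⟫) ≤ 0 := by
      rw [hexp, hin] at h1; linarith
    have h3 : ⟪Δ m, G⟫ ≤ -(L / 2) * ‖Δ m‖ ^ 2 := by
      have := mul_le_mul_of_nonneg_left h2 hL0.le
      field_simp at this ⊢
      nlinarith
    have h4 := descent g l hl0 hdiff hlip (θ m) (θ (m + 1))
    have hcomm : ⟪G, θ (m + 1) - θ m⟫ = ⟪Δ m, G⟫ := real_inner_comm _ _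
    rw [hcomm] at h4
    simp only [ha, hΔ] at *
    nlinarith
  -- a is antitone and bounded below, so converges
  have hpos : 0 < (L - l) / 2 := by linarith
  have hanti : Antitone a := antitone_nat_of_succ_le fun m => by
    nlinarith [key m, sq_nonneg ‖Δ m‖, norm_nonneg (Δ m)]
  have hbdd' : BddBelow (Set.range a) := ⟨C₂, by rintro _ ⟨m, rfl⟩; exact hbdd _⟩
  have hconv' : Filter.Tendsto a Filter.atTop (nhds (⨅ m, a m)) :=
    tendsto_atTop_ciInf hanti hbdd'
  have hshift : Filter.Tendsto (fun m => a (m + 1)) Filter.atTop (nhds (⨅ m, a m)) :=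
    hconv'.comp (Filter.tendsto_add_atTop_nat 1)
  have hdiffto : Filter.Tendsto (fun m => a m - a (m + 1)) Filter.atTop (nhds 0) := by
    simpa using hconv'.sub hshift
  -- squeeze ‖Δ m‖^2 → 0
  have hsq : Filter.Tendsto (fun m => ‖Δ m‖ ^ 2) Filter.atTop (nhds 0) := by
    apply squeeze_zero (fun m => sq_nonneg _) (g := fun m => (2 / (L - l)) * (a m - a (m + 1)))
    · intro m
      have := key m
      have hLl : (0:ℝ) < L - l := by linarith
      calc ‖Δ m‖ ^ 2 = (2 / (L - l)) * ((L - l) / 2 * ‖Δ m‖ ^ 2) := by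
            field_simp
        _ ≤ (2 / (L - l)) * (a m - a (m + 1)) :=
            mul_le_mul_of_nonneg_left this (by positivity)
    · simpa using hdiffto.const_mul (2 / (L - l))
  have h := (Real.continuous_sqrt.tendsto 0).comp hsq
  simp only [Function.comp_def, Real.sqrt_sq (norm_nonneg _), Real.sqrt_zero] at h
  exact h
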